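/- Let α ∈ (0,1), γ > -α, and c_j = ∏_{k=0}^{j-1} Γ(k(γ+α)+γ+1)/Γ((k+1)(γ+α)+1). Then lim_{l→∞} |l·c_l / ((l-1)·c_{l-1})| = 0, so the series ∑_{j=1}^∞ c_j · j · (-λ t^{α+γ})^j converges absolutely for all λ > 0 and t ≥ 0. -/

import Mathlib

open Real Filter Finset

/-- Log-convexity bound: `Γ(x-α)/Γ(x) ≤ (x-1)^(-α)` for `0 < α < 1`, `1 < x`. -/
lemma gamma_ratio_le (α x : ℝ) (hα0 : 0 < α) (hα1 : α < 1) (hx : 1 < x) :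
    Gamma (x - α) / Gamma x ≤ (x - 1) ^ (-α) := by
  have hx1 : (0:ℝ) < x - 1 := by linarith
  have hxpos : (0:ℝ) < x := by linarith
  have hΓx : 0 < Gamma x := Real.Gamma_pos_of_pos hxpos
  have hΓx1 : 0 < Gamma (x - 1) := Real.Gamma_pos_of_pos hx1
  have hΓxa : 0 < Gamma (x - α) := Real.Gamma_pos_of_pos (by linarith)
  -- convexity
  have hconv := Real.convexOn_log_Gamma.2 (Set.mem_Ioi.2 hx1) (Set.mem_Ioi.2 hxpos)
    (le_of_lt hα0) (by linarith : (0:ℝ) ≤ 1 - α) (by ring)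
  simp only [Function.comp_apply, smul_eq_mul] at hconv
  rw [show α * (x - 1) + (1 - α) * x = x - α by ring] at hconv
  -- exponentiate
  have hexp : Gamma (x - α) ≤ Gamma (x - 1) ^ α * Gamma x ^ (1 - α) := by
    have := Real.exp_le_exp.2 hconv
    rwa [Real.exp_log hΓxa, Real.exp_add,
      mul_comm α (Real.log (Gamma (x-1))), mul_comm (1-α) (Real.log (Gamma x)),
      ← Real.rpow_def_of_pos hΓx1, ← Real.rpow_def_of_pos hΓx] at this
  -- Γ(x-1) = Γ(x)/(x-1)
  have hrec : Gamma (x - 1) = Gamma x / (x - 1) := by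
    have := Real.Gamma_add_one (ne_of_gt hx1)
    rw [show x - 1 + 1 = x by ring] at this
    field_simp [this]
    linarith
  have key : Gamma (x - 1) ^ α * Gamma x ^ (1 - α) = Gamma x * (x - 1) ^ (-α) := by
    rw [hrec, Real.div_rpow hΓx.le hx1.le, div_mul_eq_mul_div,
      ← Real.rpow_add hΓx, show α + (1 - α) = (1:ℝ) by ring, Real.rpow_one,
      Real.rpow_neg hx1.le, div_eq_mul_inv]
  rw [div_le_iff₀ hΓx, mul_comm ((x-1) ^ (-α)) (Gamma x), ← key]
  exact hexp

theorem second_order_series_abs_convergence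
    (α γ : ℝ) (hα : α ∈ Set.Ioo (0:ℝ) 1) (hγ : -α < γ)
    (c : ℕ → ℝ)
    (hc : ∀ j, c j = ∏ k ∈ Finset.range j,
      Gamma (k * (γ + α) + γ + 1) / Gamma ((k + 1) * (γ + α) + 1)) :
    Tendsto (fun l : ℕ =>
        |(l : ℝ) * c l / (((l : ℝ) - 1) * c (l - 1))|) atTop (nhds 0) ∧
    ∀ (lam t : ℝ), 0 < lam → 0 ≤ t →
      Summable (fun j : ℕ => |c j * j * (-(lam * t ^ (α + γ))) ^ j|) := by
  obtain ⟨hα0, hα1⟩ := hα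
  have hs : 0 < γ + α := by linarith
  have hγ1 : 0 < γ + 1 := by linarith
  -- positivity of c
  have hcpos : ∀ j, 0 < c j := by
    intro j
    rw [hc j]
    apply Finset.prod_pos
    intro k _
    apply div_pos (Real.Gamma_pos_of_pos ?_) (Real.Gamma_pos_of_pos ?_)
    · have : (0:ℝ) ≤ (k:ℝ) * (γ + α) := by positivity
      linarith
    · have : (0:ℝ) ≤ (k:ℝ) * (γ + α) := by positivity
      nlinarith
  -- the key eventual identity for l ≥ 2
  have hratio : ∀ l : ℕ, 2 ≤ l →
      |(l : ℝ) * c l / (((l : ℝ) - 1) * c (l - 1))| =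
        ((l:ℝ) / ((l:ℝ) - 1)) *
          (Gamma (((l:ℝ) * (γ + α) + 1) - α) / Gamma ((l:ℝ) * (γ + α) + 1)) := by
    intro l hl
    have hl1 : 1 ≤ l := by omega
    have hlR : (2:ℝ) ≤ (l:ℝ) := by exact_mod_cast hl
    have hcl : c l = c (l - 1) *
        (Gamma (((l:ℝ) * (γ + α) + 1) - α) / Gamma ((l:ℝ) * (γ + α) + 1)) := by
      rw [hc l, hc (l - 1)]
      have : l = (l - 1) + 1 := by omega
      rw [this, Finset.prod_range_succ]
      congr 2
      · push_cast [Nat.cast_sub hl1]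
        ring
      · push_cast [Nat.cast_sub hl1]
        ring
    have hΓpos : 0 < Gamma ((l:ℝ) * (γ + α) + 1) :=
      Real.Gamma_pos_of_pos (by nlinarith)
    have hΓpos2 : 0 < Gamma (((l:ℝ) * (γ + α) + 1) - α) :=
      Real.Gamma_pos_of_pos (by nlinarith)
    have hqpos : 0 < Gamma (((l:ℝ) * (γ + α) + 1) - α) / Gamma ((l:ℝ) * (γ + α) + 1) :=
      div_pos hΓpos2 hΓpos
    have hne1 : c (l - 1) ≠ 0 := (hcpos _).ne'
    have hne2 : (l:ℝ) - 1 ≠ 0 := by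
      have : (1:ℝ) < (l:ℝ) := by linarith
      linarith
    have heq : ∀ q : ℝ, (l:ℝ) * (c (l-1) * q) / (((l:ℝ) - 1) * c (l-1)) =
        ((l:ℝ) / ((l:ℝ) - 1)) * q := by
      intro q
      field_simp
    rw [hcl, heq]
    exact abs_of_pos (mul_pos (div_pos (by linarith) (by linarith)) hqpos)
  -- the limit statement
  have hlim : Tendsto (fun l : ℕ =>
      |(l : ℝ) * c l / (((l : ℝ) - 1) * c (l - 1))|) atTop (nhds 0) := by
    have h1 : Tendsto (fun l : ℕ => (l:ℝ) / ((l:ℝ) - 1)) atTop (nhds 1) := by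
      have := tendsto_natCast_div_add_atTop (-1 : ℝ)
      simpa [sub_eq_add_neg] using this
    have h2 : Tendsto (fun l : ℕ => ((l:ℝ) * (γ + α)) ^ (-α)) atTop (nhds 0) :=
      (tendsto_rpow_neg_atTop hα0).comp (tendsto_natCast_atTop_atTop.atTop_mul_const hs)
    have hg : Tendsto (fun l : ℕ => ((l:ℝ) / ((l:ℝ) - 1)) *
        ((l:ℝ) * (γ + α)) ^ (-α)) atTop (nhds 0) := by
      simpa using h1.mul h2
    refine tendsto_of_tendsto_of_tendsto_of_le_of_le' tendsto_const_nhds hg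
      (Eventually.of_forall fun l => abs_nonneg _) ?_
    filter_upwards [eventually_ge_atTop 2] with l hl
    rw [hratio l hl]
    have hlR : (2:ℝ) ≤ (l:ℝ) := by exact_mod_cast hl
    have hb := gamma_ratio_le α ((l:ℝ) * (γ + α) + 1) hα0 hα1 (by nlinarith)
    rw [show (l:ℝ) * (γ + α) + 1 - 1 = (l:ℝ) * (γ + α) by ring] at hb
    exact mul_le_mul_of_nonneg_left hb (div_nonneg (by linarith) (by linarith))
  refine ⟨hlim, ?_⟩
  intro lam t hlam ht
  rcases eq_or_lt_of_le ht with ht0 | ht0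
  · -- t = 0
    have hz : ∀ j : ℕ, |c j * j * (-(lam * t ^ (α + γ))) ^ j| = 0 := by
      intro j
      rw [← ht0, Real.zero_rpow (ne_of_gt (by linarith : (0:ℝ) < α + γ))]
      cases j with
      | zero => simp
      | succ n => simp [zero_pow]
    exact (summable_congr fun j => (hz j).symm).mp summable_zero
  · -- t > 0
    set r : ℝ := lam * t ^ (α + γ) with hr
    have hrpos : 0 < r := mul_pos hlam (Real.rpow_pos_of_pos ht0 _)
    have hrne : (-r) ≠ 0 := neg_ne_zero.mpr hrpos.ne'
    apply summable_of_ratio_test_tendsto_lt_one one_pos ?_ ?_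
    · filter_upwards [eventually_ge_atTop 1] with n hn
      have hn0 : (0:ℝ) < (n:ℝ) := by exact_mod_cast hn
      exact abs_ne_zero.mpr (mul_ne_zero (mul_ne_zero (hcpos n).ne' hn0.ne')
        (pow_ne_zero _ hrne))
    · have h0 : Tendsto (fun n : ℕ =>
          |((n+1 : ℕ) : ℝ) * c (n+1) / ((((n+1 : ℕ) : ℝ) - 1) * c n)| * r)
          atTop (nhds 0) := by
        have := (hlim.comp (tendsto_add_atTop_nat 1)).mul_const r
        simpa using this
      refine h0.congr' ?_
      filter_upwards [eventually_ge_atTop 1] with n hn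
      have hn0 : (0:ℝ) < (n:ℝ) := by exact_mod_cast hn
      have hcn : c n ≠ 0 := (hcpos n).ne'
      have hpne : (-r) ^ n ≠ 0 := pow_ne_zero _ hrne
      have hA : (c (n+1) * ((n+1 : ℕ) : ℝ) * (-r) ^ (n+1)) / (c n * (n:ℝ) * (-r) ^ n) =
          (((n+1 : ℕ) : ℝ) * c (n+1) / ((((n+1 : ℕ) : ℝ) - 1) * c n)) * (-r) := by
        push_cast
        rw [pow_succ]
        field_simp
        ring_nf
        simp [hn0.ne']
      simp only [Real.norm_eq_abs, abs_abs]
      rw [← abs_div, hA, abs_mul, abs_neg, abs_of_pos hrpos]
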